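/- arXiv:2502.21083 — 3 statements merged into one kernel-verified Lean document; each statement's English description precedes it below -/
import Mathlib

section
/- For each n let γ_n be a coupling of a graph model RG_n (a PMF on simple graphs on Fin n) and a digraph model RD_n (a PMF on simple digraphs on Fin n), and let Ξ_n be the total number of coupling errors under γ_n. Let (r_n)_{n≥1} be a sequence of natural numbers such that P(Ξ_n ≤ r_n) → 1 as n → ∞, and suppose the sequence of events (Q_n)_{n≥1} is completely insensitive at rate r_n. Then P(RG_n ∈ Q_n) − P(RD_n ∈ 𝒰⁻¹(Q_n)) → 0 as n → ∞. -/
/-- A simple digraph on `Fin n`: an irreflexive Bool-valued relation. -/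
abbrev DigraphOn (n : ℕ) := {A : Fin n → Fin n → Bool // ∀ v, A v v = false}

/-- A simple graph on `Fin n`: an irreflexive symmetric Bool-valued relation. -/
abbrev GraphOn (n : ℕ) :=
  {A : Fin n → Fin n → Bool // (∀ v, A v v = false) ∧ ∀ v w, A v w = A w v}

/-- The forgetful map `𝒰`. -/
def forget {n : ℕ} (D : DigraphOn n) : GraphOn n :=
  ⟨fun v w => D.1 v w || D.1 w v, by
    refine ⟨fun v => ?_, fun v w => ?_⟩
    · simp [D.2]
    · exact Bool.or_comm _ _⟩

/-- `P(μ ∈ Q)`, the probability a PMF assigns to an event `Q`. -/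
noncomputable def probOf {α : Type*} (μ : PMF α) (Q : Set α) : ℝ :=
  (∑' x : Q, μ x.1).toReal

/-- `G` is a subgraph of `H`. -/
def GraphLE {n : ℕ} (G H : GraphOn n) : Prop :=
  ∀ v w, G.1 v w = true → H.1 v w = true

/-- The number of (unordered) edges of `H` that are not edges of `G`. -/
def addedEdges {n : ℕ} (G H : GraphOn n) : ℕ :=
  (Finset.univ.filter fun q : Fin n × Fin n =>
    q.1 < q.2 ∧ H.1 q.1 q.2 = true ∧ G.1 q.1 q.2 = false).card

/-- `Ξ⁽¹⁾`: the number of unordered pairs `{v,w}` that form an edge of `G` while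
neither `(v,w)` nor `(w,v)` is an arc of `D`. -/
def xi1 {n : ℕ} (G : GraphOn n) (D : DigraphOn n) : ℕ :=
  (Finset.univ.filter fun q : Fin n × Fin n =>
    q.1 < q.2 ∧ G.1 q.1 q.2 = true ∧ D.1 q.1 q.2 = false ∧ D.1 q.2 q.1 = false).card

/-- `Ξ⁽²⁾`: the number of unordered pairs `{v,w}` such that `(v,w)` or `(w,v)` is
an arc of `D` while `{v,w}` is not an edge of `G`. -/
def xi2 {n : ℕ} (G : GraphOn n) (D : DigraphOn n) : ℕ :=
  (Finset.univ.filter fun q : Fin n × Fin n =>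
    q.1 < q.2 ∧ (D.1 q.1 q.2 = true ∨ D.1 q.2 q.1 = true) ∧ G.1 q.1 q.2 = false).card

/-- The total number of location coupling errors `Ξ = Ξ⁽¹⁾ + Ξ⁽²⁾`. -/
def xi {n : ℕ} (G : GraphOn n) (D : DigraphOn n) : ℕ := xi1 G D + xi2 G D

/-- `(Q_n)` is insensitive for increase at rate `r_n`: for every sequence of
couplings `(X_n, Y_n)` such that almost surely `X_n ⊆ Y_n` and `Y_n` has at most
`r_n` edges not in `X_n`, one has `P(X_n ∈ Q_n) − P(Y_n ∈ Q_n) → 0`. -/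
def InsensitiveIncr (Q : ∀ n : ℕ, Set (GraphOn n)) (r : ℕ → ℕ) : Prop :=
  ∀ γ : ∀ n : ℕ, PMF (GraphOn n × GraphOn n),
    (∀ n, probOf (γ n) {xy | GraphLE xy.1 xy.2 ∧ addedEdges xy.1 xy.2 ≤ r n} = 1) →
    Filter.Tendsto
      (fun n => probOf ((γ n).map Prod.fst) (Q n) - probOf ((γ n).map Prod.snd) (Q n))
      Filter.atTop (nhds 0)

/-- `(Q_n)` is insensitive for decrease at rate `r_n`: for every sequence of
couplings `(Y_n, X_n)` such that almost surely `X_n` is obtained from `Y_n` by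
removing at most `r_n` edges, one has `P(Y_n ∈ Q_n) − P(X_n ∈ Q_n) → 0`. -/
def InsensitiveDecr (Q : ∀ n : ℕ, Set (GraphOn n)) (r : ℕ → ℕ) : Prop :=
  ∀ γ : ∀ n : ℕ, PMF (GraphOn n × GraphOn n),
    (∀ n, probOf (γ n) {yx | GraphLE yx.2 yx.1 ∧ addedEdges yx.2 yx.1 ≤ r n} = 1) →
    Filter.Tendsto
      (fun n => probOf ((γ n).map Prod.fst) (Q n) - probOf ((γ n).map Prod.snd) (Q n))
      Filter.atTop (nhds 0)

/-- `(Q_n)` is completely insensitive at rate `r_n`. -/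
def CompletelyInsensitive (Q : ∀ n : ℕ, Set (GraphOn n)) (r : ℕ → ℕ) : Prop :=
  InsensitiveIncr Q r ∧ InsensitiveDecr Q r


section AuxLemmas
variable {α β : Type*}

variable {α β : Type*}

lemma probOf_eq_toReal (μ : PMF α) (Q : Set α) :
    probOf μ Q = (μ.toOuterMeasure Q).toReal := by
  rw [probOf, PMF.toOuterMeasure_apply, ← tsum_subtype]

lemma om_le_one (μ : PMF α) (Q : Set α) : μ.toOuterMeasure Q ≤ 1 := by
  calc μ.toOuterMeasure Q ≤ μ.toOuterMeasure Set.univ :=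
        μ.toOuterMeasure.mono (Set.subset_univ Q)
    _ = 1 := (PMF.toOuterMeasure_apply_eq_one_iff μ Set.univ).2 (Set.subset_univ _)

lemma om_ne_top (μ : PMF α) (Q : Set α) : μ.toOuterMeasure Q ≠ ⊤ :=
  fun h => by simpa [h] using om_le_one μ Q

lemma probOf_univ (μ : PMF α) : probOf μ Set.univ = 1 := by
  rw [probOf_eq_toReal, (PMF.toOuterMeasure_apply_eq_one_iff μ Set.univ).2 (Set.subset_univ _)]
  simp

lemma probOf_map (μ : PMF α) (f : α → β) (Q : Set β) :
    probOf (μ.map f) Q = probOf μ (f ⁻¹' Q) := by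
  rw [probOf_eq_toReal, probOf_eq_toReal, PMF.toOuterMeasure_map_apply]

lemma om_add_compl (μ : PMF α) (S : Set α) :
    μ.toOuterMeasure S + μ.toOuterMeasure Sᶜ = 1 := by
  rw [PMF.toOuterMeasure_apply, PMF.toOuterMeasure_apply, ← ENNReal.tsum_add]
  rw [tsum_congr (fun x => ?_)]
  · exact μ.tsum_coe
  · exact congrFun (Set.indicator_self_add_compl S μ) x

lemma probOf_compl (μ : PMF α) (S : Set α) :
    probOf μ Sᶜ = 1 - probOf μ S := by
  rw [probOf_eq_toReal, probOf_eq_toReal]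
  have h := om_add_compl μ S
  have h1 := om_ne_top μ S
  have h2 := om_ne_top μ Sᶜ
  have := congrArg ENNReal.toReal h
  rw [ENNReal.toReal_add h1 h2] at this
  simp at this
  linarith

lemma abs_probOf_map_sub_le (μ : PMF α) (f g : α → β) (Q : Set β) (S : Set α)
    (h : ∀ x ∈ S, f x = g x) :
    |probOf (μ.map f) Q - probOf (μ.map g) Q| ≤ 1 - probOf μ S := by
  rw [probOf_map, probOf_map, ← probOf_compl]
  have key : ∀ (f g : α → β), (∀ x ∈ S, f x = g x) →
      μ.toOuterMeasure (f ⁻¹' Q) ≤ μ.toOuterMeasure (g ⁻¹' Q) + μ.toOuterMeasure Sᶜ := by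
    intro f g h
    calc μ.toOuterMeasure (f ⁻¹' Q) ≤ μ.toOuterMeasure ((g ⁻¹' Q) ∪ Sᶜ) := by
          apply μ.toOuterMeasure.mono
          intro x hx
          by_cases hxS : x ∈ S
          · exact Or.inl (by simpa [Set.mem_preimage, ← h x hxS] using hx)
          · exact Or.inr hxS
      _ ≤ _ := MeasureTheory.measure_union_le _ _
  have k1 := key f g h
  have k2 := key g f (fun x hx => (h x hx).symm)
  rw [probOf_eq_toReal, probOf_eq_toReal, probOf_eq_toReal, abs_sub_le_iff]
  constructor <;>
  · rw [sub_le_iff_le_add, add_comm, ← ENNReal.toReal_add (om_ne_top _ _) (om_ne_top _ _)]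
    exact ENNReal.toReal_mono (ENNReal.add_ne_top.2 ⟨om_ne_top _ _, om_ne_top _ _⟩) (by assumption)



/-- Intersection of a graph with the underlying graph of a digraph. -/
def interG {n : ℕ} (g : GraphOn n) (d : DigraphOn n) : GraphOn n :=
  ⟨fun v w => g.1 v w && (d.1 v w || d.1 w v), by
    refine ⟨fun v => by simp [g.2.1], fun v w => ?_⟩
    show (g.1 v w && (d.1 v w || d.1 w v)) = (g.1 w v && (d.1 w v || d.1 v w))
    rw [g.2.2 v w, Bool.or_comm]⟩

lemma interG_le_left {n : ℕ} (g : GraphOn n) (d : DigraphOn n) : GraphLE (interG g d) g := by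
  intro v w h
  simp only [interG, Bool.and_eq_true] at h
  exact h.1

lemma interG_le_forget {n : ℕ} (g : GraphOn n) (d : DigraphOn n) :
    GraphLE (interG g d) (forget d) := by
  intro v w h
  simp only [interG, Bool.and_eq_true] at h
  simpa [forget] using h.2

lemma graphLE_refl {n : ℕ} (g : GraphOn n) : GraphLE g g := fun _ _ h => h

lemma addedEdges_self {n : ℕ} (g : GraphOn n) : addedEdges g g = 0 := by
  rw [addedEdges, Finset.card_eq_zero, Finset.filter_eq_empty_iff]
  rintro q - ⟨-, h1, h2⟩
  simp [h1] at h2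

lemma addedEdges_interG_left {n : ℕ} (g : GraphOn n) (d : DigraphOn n) :
    addedEdges (interG g d) g = xi1 g d := by
  rw [addedEdges, xi1]
  congr 1
  apply Finset.filter_congr
  intro q _
  simp only [interG]
  constructor
  · rintro ⟨h0, h1, h2⟩
    rw [h1, Bool.true_and, Bool.or_eq_false_iff] at h2
    exact ⟨h0, h1, h2.1, h2.2⟩
  · rintro ⟨h0, h1, h2, h3⟩
    exact ⟨h0, h1, by rw [h1, h2, h3]; rfl⟩

lemma addedEdges_interG_forget {n : ℕ} (g : GraphOn n) (d : DigraphOn n) :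
    addedEdges (interG g d) (forget d) = xi2 g d := by
  rw [addedEdges, xi2]
  congr 1
  apply Finset.filter_congr
  intro q _
  simp only [interG, forget, Bool.or_eq_true]
  constructor
  · rintro ⟨h0, h1, h2⟩
    refine ⟨h0, h1, ?_⟩
    rcases h1 with h1 | h1 <;> rcases hg : g.1 q.1 q.2 <;> simp_all
  · rintro ⟨h0, h1, h2⟩
    refine ⟨h0, h1, by rw [h2]; rfl⟩

end AuxLemmas

/-- Approximate location coupling: if `γ_n` couples `RG_n` and `RD_n`, the number
of coupling errors satisfies `P(Ξ_n ≤ r_n) → 1`, and `(Q_n)` is completely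
insensitive at rate `r_n`, then `P(RG_n ∈ Q_n) − P(RD_n ∈ 𝒰⁻¹(Q_n)) → 0`. -/
theorem approximate_location_coupling
    (RG : ∀ n : ℕ, PMF (GraphOn n)) (RD : ∀ n : ℕ, PMF (DigraphOn n))
    (γ : ∀ n : ℕ, PMF (GraphOn n × DigraphOn n))
    (hfst : ∀ n, (γ n).map Prod.fst = RG n)
    (hsnd : ∀ n, (γ n).map Prod.snd = RD n)
    (r : ℕ → ℕ)
    (hxi : Filter.Tendsto (fun n => probOf (γ n) {gd | xi gd.1 gd.2 ≤ r n})
      Filter.atTop (nhds 1))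
    (Q : ∀ n : ℕ, Set (GraphOn n))
    (hQ : CompletelyInsensitive Q r) :
    Filter.Tendsto
      (fun n => probOf (RG n) (Q n) - probOf (RD n) (forget ⁻¹' (Q n)))
      Filter.atTop (nhds 0) := by
    classical
  obtain ⟨hIncr, hDecr⟩ := hQ
  -- the modified couplings
  set F1 : ∀ n, GraphOn n × DigraphOn n → GraphOn n × GraphOn n :=
    fun n gd => if xi gd.1 gd.2 ≤ r n then (interG gd.1 gd.2, gd.1) else (gd.1, gd.1) with hF1
  set F2 : ∀ n, GraphOn n × DigraphOn n → GraphOn n × GraphOn n :=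
    fun n gd => (forget gd.2,
      if xi gd.1 gd.2 ≤ r n then interG gd.1 gd.2 else forget gd.2) with hF2
  set A : ∀ n, PMF (GraphOn n × GraphOn n) := fun n => (γ n).map (F1 n) with hA
  set B : ∀ n, PMF (GraphOn n × GraphOn n) := fun n => (γ n).map (F2 n) with hB
  -- marginals
  have hAsnd : ∀ n, (A n).map Prod.snd = RG n := by
    intro n
    rw [hA, PMF.map_comp, ← hfst n]
    congr 1
    funext gd
    simp only [Function.comp_apply, hF1]
    split_ifs <;> rfl
  have hBfst : ∀ n, (B n).map Prod.fst = (RD n).map forget := by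
    intro n
    rw [hB, PMF.map_comp, ← hsnd n, PMF.map_comp]
    rfl
  -- a.s. conditions
  have hAcond : ∀ n, probOf (A n)
      {xy | GraphLE xy.1 xy.2 ∧ addedEdges xy.1 xy.2 ≤ r n} = 1 := by
    intro n
    rw [hA, probOf_map]
    have : (F1 n) ⁻¹' {xy | GraphLE xy.1 xy.2 ∧ addedEdges xy.1 xy.2 ≤ r n} = Set.univ := by
      apply Set.eq_univ_of_forall
      intro gd
      simp only [Set.mem_preimage, Set.mem_setOf_eq, hF1]
      split_ifs with h
      · refine ⟨interG_le_left _ _, ?_⟩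
        show addedEdges (interG gd.1 gd.2) gd.1 ≤ r n
        rw [addedEdges_interG_left]
        exact le_trans (Nat.le_add_right _ _) h
      · exact ⟨graphLE_refl _, by rw [addedEdges_self]; exact Nat.zero_le _⟩
    rw [this, probOf_univ]
  have hBcond : ∀ n, probOf (B n)
      {yx | GraphLE yx.2 yx.1 ∧ addedEdges yx.2 yx.1 ≤ r n} = 1 := by
    intro n
    rw [hB, probOf_map]
    have : (F2 n) ⁻¹' {yx | GraphLE yx.2 yx.1 ∧ addedEdges yx.2 yx.1 ≤ r n} = Set.univ := by
      apply Set.eq_univ_of_forall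
      intro gd
      simp only [Set.mem_preimage, Set.mem_setOf_eq, hF2]
      split_ifs with h
      · refine ⟨interG_le_forget _ _, ?_⟩
        show addedEdges (interG gd.1 gd.2) (forget gd.2) ≤ r n
        rw [addedEdges_interG_forget]
        exact le_trans (Nat.le_add_left _ _) h
      · exact ⟨graphLE_refl _, by rw [addedEdges_self]; exact Nat.zero_le _⟩
    rw [this, probOf_univ]
  have h1 := hIncr A hAcond
  have h2 := hDecr B hBcond
  -- middle comparison
  have h3 : Filter.Tendsto (fun n => probOf ((A n).map Prod.fst) (Q n) -
      probOf ((B n).map Prod.snd) (Q n)) Filter.atTop (nhds 0) := by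
    apply squeeze_zero_norm (a := fun n => 1 - probOf (γ n) {gd | xi gd.1 gd.2 ≤ r n})
    · intro n
      rw [hA, hB, PMF.map_comp, PMF.map_comp]
      exact abs_probOf_map_sub_le (γ n) _ _ (Q n) {gd | xi gd.1 gd.2 ≤ r n}
        (fun gd hgd => by
          simp only [Set.mem_setOf_eq] at hgd
          simp only [Function.comp_apply, hF1, hF2, if_pos hgd])
    · have := (tendsto_const_nhds (x := (1:ℝ)) (f := Filter.atTop)).sub hxi
      simpa using this
  have htot := ((h1.neg).add h3).sub h2
  simp only [add_zero, neg_zero, sub_zero, neg_neg] at htot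
  apply htot.congr
  intro n
  have e1 : probOf ((A n).map Prod.snd) (Q n) = probOf (RG n) (Q n) := by rw [hAsnd]
  have e2 : probOf ((B n).map Prod.fst) (Q n) = probOf (RD n) (forget ⁻¹' Q n) := by
    rw [hBfst, probOf_map]
  rw [e1, e2]
  ring
end

section
/- Fix n ≥ 1, a countable type set 𝒱, a probability mass function τ on type vectors t : Fin n → 𝒱, and a function π : 𝒱 × 𝒱 → [0,1]. Define π' : 𝒱 × 𝒱 → [0,1] by π'(a,b) = 1 − (1 − π(a,b))(1 − π(b,a)). Then the pushforward under the forgetful map 𝒰 of the independent arc graph model IAG_n(τ, π) equals the independent edge graph model IEG_n(τ, π') as probability mass functions on simple graphs on Fin n: Φ(IAG_n(τ, π)) = IEG_n(τ, π'). -/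
/-- The mass that the independent arc graph model `IAG_n(τ, π)` assigns to a
simple digraph `D`: sample a type vector `t ∼ τ`, then include each arc `(v,w)`
(`v ≠ w`) independently with probability `π (t v) (t w)`. -/
noncomputable def iagMass {n : ℕ} {V : Type*} (τ : PMF (Fin n → V))
    (π : V → V → ℝ) (D : DigraphOn n) : ℝ :=
  ∑' t : Fin n → V, (τ t).toReal *
    ∏ q ∈ Finset.univ.filter (fun q : Fin n × Fin n => q.1 ≠ q.2),
      (if D.1 q.1 q.2 = true then π (t q.1) (t q.2) else 1 - π (t q.1) (t q.2))

/-- The mass that the independent edge graph model `IEG_n(τ, π)` assigns to a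
simple graph `G`: sample a type vector `t ∼ τ`, then include each edge `{v,w}`
(`v < w`) independently with probability `π (t v) (t w)`. -/
noncomputable def iegMass {n : ℕ} {V : Type*} (τ : PMF (Fin n → V))
    (π : V → V → ℝ) (G : GraphOn n) : ℝ :=
  ∑' t : Fin n → V, (τ t).toReal *
    ∏ q ∈ Finset.univ.filter (fun q : Fin n × Fin n => q.1 < q.2),
      (if G.1 q.1 q.2 = true then π (t q.1) (t q.2) else 1 - π (t q.1) (t q.2))

-- Sub-lemma A: product over ≠ pairs splits into < pairs
lemma prod_ne_eq_prod_lt {n : ℕ} {M : Type*} [CommMonoid M] (w : Fin n × Fin n → M) :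
    ∏ q ∈ Finset.univ.filter (fun q : Fin n × Fin n => q.1 ≠ q.2), w q
      = ∏ q ∈ Finset.univ.filter (fun q : Fin n × Fin n => q.1 < q.2), w q * w q.swap := by
  have hsplit : Finset.univ.filter (fun q : Fin n × Fin n => q.1 ≠ q.2)
      = (Finset.univ.filter (fun q : Fin n × Fin n => q.1 < q.2)) ∪
        (Finset.univ.filter (fun q : Fin n × Fin n => q.2 < q.1)) := by
    ext q
    simp only [Finset.mem_filter, Finset.mem_union, Finset.mem_univ, true_and]
    constructor
    · intro h; exact h.lt_or_gt
    · rintro (h | h)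
      · exact h.ne
      · exact h.ne'
  rw [hsplit, Finset.prod_union, Finset.prod_mul_distrib]
  · congr 1
    refine (Finset.prod_nbij' (fun q => q.swap) (fun q => q.swap) ?_ ?_ ?_ ?_ ?_).symm
    · intro a ha; simp at ha ⊢; exact ha
    · intro a ha; simp at ha ⊢; exact ha
    · intro a _; simp
    · intro a _; simp
    · intro a _; rfl
  · rw [Finset.disjoint_left]
    intro q hq hq'
    simp at hq hq'
    exact absurd hq' hq.asymm

section Key

/-- inverse map from pair-data to digraphs -/
def ofPairs {n : ℕ} (f : {q : Fin n × Fin n // q.1 < q.2} → Bool × Bool) : DigraphOn n :=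
  ⟨fun v w =>
    if h : v < w then (f ⟨(v, w), h⟩).1
    else if h' : w < v then (f ⟨(w, v), h'⟩).2
    else false, by intro v; simp⟩

lemma key_sum {n : ℕ} {V : Type*} (π : V → V → ℝ) (G : GraphOn n) (t : Fin n → V) :
    ∑ D ∈ Finset.univ.filter (fun D : DigraphOn n => forget D = G),
      ∏ q ∈ Finset.univ.filter (fun q : Fin n × Fin n => q.1 ≠ q.2),
        (if D.1 q.1 q.2 = true then π (t q.1) (t q.2) else 1 - π (t q.1) (t q.2))
    = ∏ q ∈ Finset.univ.filter (fun q : Fin n × Fin n => q.1 < q.2),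
        (if G.1 q.1 q.2 = true
          then 1 - (1 - π (t q.1) (t q.2)) * (1 - π (t q.2) (t q.1))
          else (1 - π (t q.1) (t q.2)) * (1 - π (t q.2) (t q.1))) := by
  classical
  set P := {q : Fin n × Fin n // q.1 < q.2}
  let wt : Fin n × Fin n → Bool → ℝ := fun q b =>
    if b then π (t q.1) (t q.2) else 1 - π (t q.1) (t q.2)
  let wt2 : P → Bool × Bool → ℝ := fun p ab => wt p.1 ab.1 * wt p.1.swap ab.2
  let allowed : P → Finset (Bool × Bool) := fun p =>
    Finset.univ.filter (fun ab => (ab.1 || ab.2) = G.1 p.1.1 p.1.2)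
  show ∑ D ∈ Finset.univ.filter (fun D : DigraphOn n => forget D = G),
      ∏ q ∈ Finset.univ.filter (fun q : Fin n × Fin n => q.1 ≠ q.2),
        wt q (D.1 q.1 q.2) = _
  have step1 : ∑ D ∈ Finset.univ.filter (fun D : DigraphOn n => forget D = G),
      ∏ q ∈ Finset.univ.filter (fun q : Fin n × Fin n => q.1 ≠ q.2),
        wt q (D.1 q.1 q.2)
      = ∑ f ∈ Fintype.piFinset allowed, ∏ p : P, wt2 p (f p) := by
    refine Finset.sum_nbij' (fun D => fun p : P => (D.1 p.1.1 p.1.2, D.1 p.1.2 p.1.1))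
      (fun f => ofPairs f) ?_ ?_ ?_ ?_ ?_
    · intro D hD
      simp only [Finset.mem_filter, Finset.mem_univ, true_and] at hD
      rw [Fintype.mem_piFinset]
      intro p
      simp only [allowed, Finset.mem_filter, Finset.mem_univ, true_and]
      exact congrFun (congrFun (congrArg Subtype.val hD) p.1.1) p.1.2
    · intro f hf
      rw [Fintype.mem_piFinset] at hf
      simp only [Finset.mem_filter, Finset.mem_univ, true_and]
      apply Subtype.ext
      funext v w
      show ((ofPairs f).1 v w || (ofPairs f).1 w v) = G.1 v w
      rcases lt_trichotomy v w with h | h | h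
      · have hv := hf ⟨(v, w), h⟩
        simp only [allowed, Finset.mem_filter, Finset.mem_univ, true_and] at hv
        have e1 : (ofPairs f).1 v w = (f ⟨(v, w), h⟩).1 := dif_pos h
        have e2 : (ofPairs f).1 w v = (f ⟨(v, w), h⟩).2 := by
          show dite _ _ _ = _
          rw [dif_neg h.asymm, dif_pos h]
        rw [e1, e2]; exact hv
      · subst h
        have e1 : (ofPairs f).1 v v = false := by
          show dite _ _ _ = _
          rw [dif_neg (lt_irrefl v), dif_neg (lt_irrefl v)]
        rw [e1, G.2.1 v]; rfl
      · have hv := hf ⟨(w, v), h⟩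
        simp only [allowed, Finset.mem_filter, Finset.mem_univ, true_and] at hv
        have e1 : (ofPairs f).1 w v = (f ⟨(w, v), h⟩).1 := dif_pos h
        have e2 : (ofPairs f).1 v w = (f ⟨(w, v), h⟩).2 := by
          show dite _ _ _ = _
          rw [dif_neg h.asymm, dif_pos h]
        rw [e1, e2, Bool.or_comm, G.2.2 v w]; exact hv
    · intro D _
      apply Subtype.ext
      funext v w
      show dite _ _ _ = _
      rcases lt_trichotomy v w with h | h | h
      · rw [dif_pos h]
      · subst h
        rw [dif_neg (lt_irrefl v), dif_neg (lt_irrefl v), D.2 v]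
      · rw [dif_neg h.asymm, dif_pos h]
    · intro f _
      funext p
      refine Prod.ext ?_ ?_
      · exact dif_pos p.2
      · show dite _ _ _ = _
        rw [dif_neg p.2.asymm, dif_pos p.2]
    · intro D _
      rw [prod_ne_eq_prod_lt (fun q => wt q (D.1 q.1 q.2))]
      rw [Finset.prod_subtype (Finset.univ.filter (fun q : Fin n × Fin n => q.1 < q.2))
        (p := fun q : Fin n × Fin n => q.1 < q.2) (by simp)]
      rfl
  have step2 : ∑ f ∈ Fintype.piFinset allowed, ∏ p : P, wt2 p (f p)
      = ∏ p : P, ∑ ab ∈ allowed p, wt2 p ab := (Finset.prod_univ_sum allowed wt2).symm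
  have step3 : ∀ p : P, ∑ ab ∈ allowed p, wt2 p ab
      = (if G.1 p.1.1 p.1.2 = true
          then 1 - (1 - π (t p.1.1) (t p.1.2)) * (1 - π (t p.1.2) (t p.1.1))
          else (1 - π (t p.1.1) (t p.1.2)) * (1 - π (t p.1.2) (t p.1.1))) := by
    intro p
    rcases Bool.eq_false_or_eq_true (G.1 p.1.1 p.1.2) with hG | hG <;>
    · show ∑ ab ∈ Finset.univ.filter (fun ab : Bool × Bool => (ab.1 || ab.2) = G.1 p.1.1 p.1.2),
        wt2 p ab = _
      rw [hG, Finset.sum_filter, Fintype.sum_prod_type]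
      simp only [Fintype.sum_bool, Bool.or_true, Bool.or_false, Bool.true_or, Bool.false_or]
      simp only [wt2, wt, if_pos, if_neg, Bool.true_eq_false, Bool.false_eq_true, if_true,
        if_false, Prod.fst_swap, Prod.snd_swap]
      ring_nf
  have step4 : ∏ q ∈ Finset.univ.filter (fun q : Fin n × Fin n => q.1 < q.2),
      (if G.1 q.1 q.2 = true
          then 1 - (1 - π (t q.1) (t q.2)) * (1 - π (t q.2) (t q.1))
          else (1 - π (t q.1) (t q.2)) * (1 - π (t q.2) (t q.1)))
      = ∏ p : P, (if G.1 p.1.1 p.1.2 = true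
          then 1 - (1 - π (t p.1.1) (t p.1.2)) * (1 - π (t p.1.2) (t p.1.1))
          else (1 - π (t p.1.1) (t p.1.2)) * (1 - π (t p.1.2) (t p.1.1))) :=
    Finset.prod_subtype _ (by simp) _
  rw [step1, step2, step4]
  exact Finset.prod_congr rfl (fun p _ => step3 p)

end Key

/-- Exact `IAG` to `IEG`: the pushforward under the forgetful map of
`IAG_n(τ, π)` equals `IEG_n(τ, π')` with
`π'(a,b) = 1 − (1 − π(a,b))(1 − π(b,a))`; that is, for every simple graph `G`,
`Φ(IAG_n(τ, π))(G) = ∑_{D : 𝒰(D) = G} IAG_n(τ, π)(D) = IEG_n(τ, π')(G)`. -/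
theorem forgetful_iag_eq_ieg (n : ℕ) (hn : 1 ≤ n) {V : Type*} [Countable V]
    (τ : PMF (Fin n → V)) (π : V → V → ℝ)
    (hπ0 : ∀ a b, 0 ≤ π a b) (hπ1 : ∀ a b, π a b ≤ 1) :
    ∀ G : GraphOn n,
      ∑ D ∈ Finset.univ.filter (fun D : DigraphOn n => forget D = G),
          iagMass τ π D
        = iegMass τ (fun a b => 1 - (1 - π a b) * (1 - π b a)) G := by
  intro G
  classical
  have hτ : Summable (fun t : Fin n → V => (τ t).toReal) :=
    ENNReal.summable_toReal (by rw [τ.tsum_coe]; exact ENNReal.one_ne_top)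
  have hsumm : ∀ D : DigraphOn n, Summable (fun t : Fin n → V => (τ t).toReal *
      ∏ q ∈ Finset.univ.filter (fun q : Fin n × Fin n => q.1 ≠ q.2),
        (if D.1 q.1 q.2 = true then π (t q.1) (t q.2)
          else 1 - π (t q.1) (t q.2))) := by
    intro D
    apply Summable.of_nonneg_of_le _ _ hτ
    · intro t
      apply mul_nonneg ENNReal.toReal_nonneg
      apply Finset.prod_nonneg
      intro q _
      split
      · exact hπ0 _ _
      · linarith [hπ1 (t q.1) (t q.2)]
    · intro t
      have h1 : ∏ q ∈ Finset.univ.filter (fun q : Fin n × Fin n => q.1 ≠ q.2),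
          (if D.1 q.1 q.2 = true then π (t q.1) (t q.2)
            else 1 - π (t q.1) (t q.2)) ≤ 1 := by
        apply Finset.prod_le_one
        · intro q _
          split
          · exact hπ0 _ _
          · linarith [hπ1 (t q.1) (t q.2)]
        · intro q _
          split
          · exact hπ1 _ _
          · linarith [hπ0 (t q.1) (t q.2)]
      calc (τ t).toReal * _ ≤ (τ t).toReal * 1 :=
            mul_le_mul_of_nonneg_left h1 ENNReal.toReal_nonneg
        _ = (τ t).toReal := mul_one _
  unfold iagMass iegMass
  rw [← Summable.tsum_finsetSum (fun D _ => hsumm D)]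
  apply tsum_congr
  intro t
  rw [← Finset.mul_sum, key_sum π G t]
  congr 1
  refine Finset.prod_congr rfl fun q _ => ?_
  split <;> ring
end

section
/- Let (Ω, ℱ, P) be a probability space with a filtration (ℱ_s)_{s=0}^m, let f be a real number with f > m + 2, and let (Ψ_s)_{s=0}^m be an adapted ℕ-valued process with Ψ_0 = 0 and Ψ_{s+1} − Ψ_s ∈ {0,1} almost surely for each 0 ≤ s < m. Suppose that for each 0 ≤ s < m, E[Ψ_{s+1} − Ψ_s | ℱ_s] ≤ (s − 2Ψ_s)/(f − s) almost surely. Define a_i = i/(f − i) and b_i = 1 − 2/(f − i) for 1 ≤ i ≤ m, and set M_s = ( Ψ_s − Σ_{i=1}^s a_i Π_{j=i+1}^s b_j ) / Π_{i=1}^s b_i for 0 ≤ s ≤ m. Then (M_s)_{s=0}^m is a supermartingale with respect to (ℱ_s)_{s=0}^m: E[M_{s+1} | ℱ_s] ≤ M_s almost surely for each 0 ≤ s < m. -/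
open MeasureTheory

/-- The normalised error process
`M_s = (Ψ_s − ∑_{i=1}^s a_i ∏_{j=i+1}^s b_j) / ∏_{i=1}^s b_i`,
where `a_i = i/(f−i)` and `b_i = 1 − 2/(f−i)`. -/
noncomputable def Mproc {Ω : Type*} (f : ℝ) (Ψ : ℕ → Ω → ℕ) (s : ℕ) (ω : Ω) : ℝ :=
  ((Ψ s ω : ℝ) -
      ∑ i ∈ Finset.Icc 1 s, ((i : ℝ) / (f - (i : ℝ))) *
        ∏ j ∈ Finset.Icc (i + 1) s, (1 - 2 / (f - (j : ℝ)))) /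
    ∏ i ∈ Finset.Icc 1 s, (1 - 2 / (f - (i : ℝ)))

lemma alg_aux (y d S B s f : ℝ) (hB : 0 < B) (hfs : s + 3 < f)
    (hy : 0 ≤ s - 2*y) (hd : d ≤ (s - 2*y)/(f - s)) :
    (y + d - ((s+1)/(f-(s+1)) + (1 - 2/(f-(s+1)))*S)) / ((1 - 2/(f-(s+1)))*B)
      ≤ (y - S)/B := by
  have hu : (2:ℝ) < f - (s+1) := by linarith
  have hb : 0 < 1 - 2/(f-(s+1)) := by
    rw [sub_pos, div_lt_one (by linarith)]; linarith
  have hfs0 : (0:ℝ) < f - s := by linarith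
  have h2 : d ≤ ((s+1) - 2*y)/(f-(s+1)) := by
    refine hd.trans ?_
    rw [div_le_div_iff₀ hfs0 (by linarith)]
    nlinarith
  have e1 : ((s+1) - 2*y)/(f-(s+1)) = (s+1)/(f-(s+1)) - y * (2/(f-(s+1))) := by
    ring
  have hgoal : y + d - ((s+1)/(f-(s+1)) + (1 - 2/(f-(s+1)))*S)
      ≤ (y - S) * (1 - 2/(f-(s+1))) := by
    rw [e1] at h2; nlinarith [h2]
  calc (y + d - ((s+1)/(f-(s+1)) + (1 - 2/(f-(s+1)))*S)) / ((1 - 2/(f-(s+1)))*B)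
      ≤ ((y - S) * (1 - 2/(f-(s+1)))) / ((1 - 2/(f-(s+1)))*B) := by
        apply div_le_div_of_nonneg_right hgoal (by positivity) |>.trans_eq rfl
    _ = (y - S)/B := by
        rw [mul_comm (1 - 2/(f-(s+1))) B, mul_div_mul_right]
        exact ne_of_gt hb


/-- The error process induces a supermartingale: if `(Ψ_s)_{s≤m}` is adapted,
`ℕ`-valued, starts at `0`, has increments in `{0,1}` a.s., and satisfies
`E[Ψ_{s+1} − Ψ_s | ℱ_s] ≤ (s − 2Ψ_s)/(f − s)` a.s. for `s < m`, then
`E[M_{s+1} | ℱ_s] ≤ M_s` a.s. for every `s < m`. -/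
theorem error_supermartingale {Ω : Type*} {m0 : MeasurableSpace Ω}
    (P : Measure Ω) [IsProbabilityMeasure P]
    (ℱ : Filtration ℕ m0) (m : ℕ) (f : ℝ) (hf : (m : ℝ) + 2 < f)
    (Ψ : ℕ → Ω → ℕ)
    (hadapted : ∀ s ≤ m, Measurable[ℱ s] (Ψ s))
    (h0 : ∀ ω, Ψ 0 ω = 0)
    (hstep : ∀ᵐ ω ∂P, ∀ s < m, Ψ (s + 1) ω = Ψ s ω ∨ Ψ (s + 1) ω = Ψ s ω + 1)
    (hdrift : ∀ s < m, ∀ᵐ ω ∂P,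
      (P[fun ω' => ((Ψ (s + 1) ω' : ℝ) - (Ψ s ω' : ℝ)) | ℱ s]) ω
        ≤ ((s : ℝ) - 2 * (Ψ s ω : ℝ)) / (f - (s : ℝ))) :
    ∀ s < m, ∀ᵐ ω ∂P, (P[Mproc f Ψ (s + 1) | ℱ s]) ω ≤ Mproc f Ψ s ω := by
  intro s hs
  have hs1 : s + 1 ≤ m := hs
  set X : Ω → ℝ := fun ω => (Ψ (s+1) ω : ℝ) with hX
  set Y : Ω → ℝ := fun ω => (Ψ s ω : ℝ) with hY
  set B0 : ℝ := ∏ i ∈ Finset.Icc 1 s, (1 - 2 / (f - (i : ℝ))) with hB0def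
  set S0 : ℝ := ∑ i ∈ Finset.Icc 1 s, ((i : ℝ) / (f - (i : ℝ))) *
        ∏ j ∈ Finset.Icc (i + 1) s, (1 - 2 / (f - (j : ℝ))) with hS0def
  set b : ℝ := 1 - 2 / (f - ((s:ℝ)+1)) with hbdef
  set a : ℝ := ((s:ℝ)+1) / (f - ((s:ℝ)+1)) with hadef
  have hsm : (s:ℝ) + 1 ≤ m := by exact_mod_cast hs
  have hfs3 : (s:ℝ) + 3 < f := by linarith
  have hb_pos : 0 < b := by
    rw [hbdef, sub_pos, div_lt_one (by linarith)]; linarith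
  have hB0_pos : 0 < B0 := by
    rw [hB0def]
    apply Finset.prod_pos
    intro i hi
    have hi' := (Finset.mem_Icc.mp hi).2
    have : (i:ℝ) ≤ s := by exact_mod_cast hi'
    rw [sub_pos, div_lt_one (by linarith)]; linarith
  have hB1 : (∏ i ∈ Finset.Icc 1 (s+1), (1 - 2 / (f - (i : ℝ)))) = b * B0 := by
    rw [Finset.prod_Icc_succ_top (Nat.succ_le_succ (Nat.zero_le s))]
    push_cast [hbdef, hB0def]; ring
  have hS1 : (∑ i ∈ Finset.Icc 1 (s+1), ((i : ℝ) / (f - (i : ℝ))) *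
        ∏ j ∈ Finset.Icc (i + 1) (s+1), (1 - 2 / (f - (j : ℝ)))) = a + b * S0 := by
    rw [Finset.sum_Icc_succ_top (Nat.succ_le_succ (Nat.zero_le s))]
    have h1 : ∀ i ∈ Finset.Icc 1 s, ((i : ℝ) / (f - (i : ℝ))) *
        ∏ j ∈ Finset.Icc (i + 1) (s+1), (1 - 2 / (f - (j : ℝ)))
        = b * (((i : ℝ) / (f - (i : ℝ))) *
        ∏ j ∈ Finset.Icc (i + 1) s, (1 - 2 / (f - (j : ℝ)))) := by
      intro i hi
      have hi' := (Finset.mem_Icc.mp hi).2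
      rw [Finset.prod_Icc_succ_top (by omega)]
      push_cast [hbdef]; ring
    rw [Finset.sum_congr rfl h1, ← Finset.mul_sum, ← hS0def,
      show Finset.Icc (s+1+1) (s+1) = ∅ from Finset.Icc_eq_empty (by omega),
      Finset.prod_empty, mul_one]
    push_cast [hadef]; ring
  have hΨbd : ∀ᵐ ω ∂P, ∀ t ≤ m, (Ψ t ω : ℕ) ≤ t := by
    filter_upwards [hstep] with ω hω
    intro t
    induction t with
    | zero => intro _; simp [h0 ω]
    | succ n ih =>
      intro hn
      rcases hω n (by omega) with h | h <;> rw [h]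
      · exact Nat.le_succ_of_le (ih (by omega))
      · exact Nat.succ_le_succ (ih (by omega))
  have hXm : Measurable X :=
    (measurable_from_top.comp ((hadapted (s+1) hs1).mono (ℱ.le (s+1)) le_rfl))
  have hYm : Measurable Y :=
    (measurable_from_top.comp ((hadapted s (le_of_lt hs)).mono (ℱ.le s) le_rfl))
  have hXint : Integrable X P := by
    refine ⟨hXm.aestronglyMeasurable, HasFiniteIntegral.of_bounded (C := (s:ℝ)+1) ?_⟩
    filter_upwards [hΨbd] with ω hω
    rw [hX, Real.norm_eq_abs, abs_of_nonneg (by positivity)]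
    show ((Ψ (s+1) ω : ℝ)) ≤ (s:ℝ)+1
    exact_mod_cast hω (s+1) hs1
  have hYint : Integrable Y P := by
    refine ⟨hYm.aestronglyMeasurable, HasFiniteIntegral.of_bounded (C := (s:ℝ)) ?_⟩
    filter_upwards [hΨbd] with ω hω
    rw [hY, Real.norm_eq_abs, abs_of_nonneg (by positivity)]
    show ((Ψ s ω : ℝ)) ≤ (s:ℝ)
    exact_mod_cast hω s (le_of_lt hs)
  have hXYint : Integrable (X - Y) P := hXint.sub hYint
  have hYsm : StronglyMeasurable[ℱ s] Y :=
    (measurable_from_top.comp (hadapted s (le_of_lt hs))).stronglyMeasurable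
  have hfun : Mproc f Ψ (s+1) = (b * B0)⁻¹ • (X - fun _ => a + b * S0) := by
    funext ω
    simp only [Mproc, Pi.smul_apply, Pi.sub_apply, smul_eq_mul, hB1, hS1]
    rw [div_eq_inv_mul]
  have hcond1 : P[Mproc f Ψ (s+1)|ℱ s]
      =ᵐ[P] fun ω => (b*B0)⁻¹ * ((P[X|ℱ s]) ω - (a + b * S0)) := by
    rw [hfun]
    have hsmul := condExp_smul (m := ℱ s) (μ := P) ((b*B0)⁻¹) (X - fun _ => a + b*S0)
    have hsub := condExp_sub (m := ℱ s) (μ := P) hXint (integrable_const (a + b*S0))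
    filter_upwards [hsmul, hsub] with ω hω1 hω2
    rw [hω1]
    simp only [Pi.smul_apply, smul_eq_mul]
    rw [hω2]
    simp [condExp_const (ℱ.le s)]
  have hXsplit : X = Y + (X - Y) := by ring
  have hcond2 : P[X|ℱ s] =ᵐ[P] Y + P[X - Y|ℱ s] := by
    nth_rewrite 1 [hXsplit]
    have h2 := condExp_add (m := ℱ s) (μ := P) hYint hXYint
    refine h2.trans ?_
    have h3 : P[Y|ℱ s] =ᵐ[P] Y := by
      rw [condExp_of_stronglyMeasurable (ℱ.le s) hYsm hYint]
    filter_upwards [h3] with ω hω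
    simp only [Pi.add_apply]
    rw [hω]
  have hDnn : 0 ≤ᵐ[P] P[X - Y|ℱ s] := by
    apply condExp_nonneg
    filter_upwards [hstep] with ω hω
    simp only [Pi.sub_apply, Pi.zero_apply, hX, hY, sub_nonneg]
    rcases hω s hs with h | h <;> rw [h]
    · push_cast; linarith
  have hdriftXY : ∀ᵐ ω ∂P, (P[X - Y|ℱ s]) ω ≤ ((s : ℝ) - 2 * Y ω) / (f - (s : ℝ)) := by
    filter_upwards [hdrift s hs] with ω hω
    convert hω using 2
    rfl
  filter_upwards [hcond1, hcond2, hdriftXY, hDnn] with ω h1 h2 h3 h4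
  rw [h1]
  have h2' : (P[X|ℱ s]) ω = Y ω + (P[X - Y|ℱ s]) ω := h2
  rw [h2']
  set d := (P[X - Y|ℱ s]) ω with hd
  set y := Y ω with hy
  have h4' : (0:ℝ) ≤ d := h4
  have hden : (0:ℝ) < f - (s:ℝ) := by linarith
  have h2y : 0 ≤ (s:ℝ) - 2*y := by
    rcases div_nonneg_iff.mp (h4'.trans h3) with ⟨h, _⟩ | ⟨_, h⟩
    · exact h
    · linarith
  show (b*B0)⁻¹ * ((y + d) - (a + b*S0)) ≤ (y - S0)/B0
  rw [← div_eq_inv_mul, hbdef, hadef]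
  exact alg_aux y d S0 B0 (s:ℝ) f hB0_pos hfs3 h2y h3
end
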